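/- Let a, θ₀ ∈ ℝ. The curve (x(t), y(t), z(t)) with x(t) = tanh a (sin θ₀ − sin(θ₀ − t cosh a)), y(t) = tanh a (cos(θ₀ − t cosh a) − cos θ₀), z(t) = t(1/cosh a + cosh a)/2 + tanh² a · sin(t cosh a)/2, together with h₁(t) = sinh a cos(θ₀ − t cosh a), h₂(t) = sinh a sin(θ₀ − t cosh a), h₃ = −cosh a, satisfies the system ẋ = h₁, ẏ = h₂, ż = −y h₁/2 + x h₂/2 − h₃, ḣ₁ = −h₂h₃, ḣ₂ = h₁h₃, ḣ₃ = 0, with initial condition (x,y,z)(0) = (0,0,0). -/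

import Mathlib

theorem normal_extremal_parametrization (a θ₀ : ℝ) (x y z h1 h2 : ℝ → ℝ) (h3 : ℝ)
    (hx : x = fun t => Real.tanh a * (Real.sin θ₀ - Real.sin (θ₀ - t * Real.cosh a)))
    (hy : y = fun t => Real.tanh a * (Real.cos (θ₀ - t * Real.cosh a) - Real.cos θ₀))
    (hz : z = fun t => t * (1 / Real.cosh a + Real.cosh a) / 2 +
      Real.tanh a ^ 2 * Real.sin (t * Real.cosh a) / 2)
    (hh1 : h1 = fun t => Real.sinh a * Real.cos (θ₀ - t * Real.cosh a))
    (hh2 : h2 = fun t => Real.sinh a * Real.sin (θ₀ - t * Real.cosh a))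
    (hh3 : h3 = -Real.cosh a) :
    (∀ t, HasDerivAt x (h1 t) t) ∧
    (∀ t, HasDerivAt y (h2 t) t) ∧
    (∀ t, HasDerivAt z (-(y t) * h1 t / 2 + x t * h2 t / 2 - h3) t) ∧
    (∀ t, HasDerivAt h1 (-(h2 t * h3)) t) ∧
    (∀ t, HasDerivAt h2 (h1 t * h3) t) ∧
    x 0 = 0 ∧ y 0 = 0 ∧ z 0 = 0 := by
  subst hx hy hz hh1 hh2 hh3
  set c := Real.cosh a with hc
  set s := Real.sinh a with hs
  have hcne : c ≠ 0 := (Real.cosh_pos a).ne'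
  have hT : Real.tanh a = s / c := Real.tanh_eq_sinh_div_cosh a
  have hTc : Real.tanh a * c = s := by rw [hT]; field_simp
  have hcs : c ^ 2 - s ^ 2 = 1 := Real.cosh_sq_sub_sinh_sq a
  have hφ : ∀ t : ℝ, HasDerivAt (fun t : ℝ => θ₀ - t * c) (-c) t := fun t => by
    simpa using ((hasDerivAt_id t).mul_const c).const_sub θ₀
  refine ⟨fun t => ?_, fun t => ?_, fun t => ?_, fun t => ?_, fun t => ?_, by simp, by simp, by simp⟩
  · have := (((hφ t).sin).const_sub (Real.sin θ₀)).const_mul (Real.tanh a)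
    convert this using 1
    · rfl
    · rfl
    simp only []
    linear_combination (-Real.cos (θ₀ - t * c)) * hTc
  · have := (((hφ t).cos).sub_const (Real.cos θ₀)).const_mul (Real.tanh a)
    convert this using 1
    · rfl
    · rfl
    simp only []
    linear_combination (-Real.sin (θ₀ - t * c)) * hTc
  · have hd1 : HasDerivAt (fun t : ℝ => t * (1 / c + c) / 2) ((1 / c + c) / 2) t := by
      simpa using ((hasDerivAt_id t).mul_const (1/c+c)).div_const 2
    have hd2 : HasDerivAt (fun t : ℝ => Real.tanh a ^ 2 * Real.sin (t * c) / 2)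
        (Real.tanh a ^ 2 * (Real.cos (t * c) * c) / 2) t := by
      have h0 : HasDerivAt (fun t : ℝ => t * c) c t := by simpa using (hasDerivAt_id t).mul_const c
      simpa using ((h0.sin).const_mul (Real.tanh a ^ 2)).div_const 2
    have := hd1.add hd2
    convert this using 1
    · rfl
    · rfl
    · rfl
    simp only []
    have hcos : Real.cos (t * c) = Real.cos θ₀ * Real.cos (θ₀ - t * c)
        + Real.sin θ₀ * Real.sin (θ₀ - t * c) := by
      have := Real.cos_sub θ₀ (θ₀ - t * c); simp at this; linarith [this]
    have hpyth : Real.sin (θ₀ - t * c) ^ 2 + Real.cos (θ₀ - t * c) ^ 2 = 1 :=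
      Real.sin_sq_add_cos_sq _
    rw [hT]
    field_simp
    rw [mul_comm t c] at hcos hpyth
    linear_combination (-s^2) * hcos + (-s^2) * hpyth + hcs
  · have := ((hφ t).cos).const_mul s
    convert this using 1
    · rfl
    · rfl
    simp only []
    ring
  · have := ((hφ t).sin).const_mul s
    convert this using 1
    · rfl
    · rfl
    simp only []
    ring
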